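/- Let μ be a partition of n, ζ a corner cell of μ, and ν = μ∖{ζ}. Then in ℚ(q,t) the Pieri coefficient c_{μν}(q,t) := ∏_{α∈Row(ζ)} (t^{l_μ(α)} − q^{a_μ(α)+1})/(t^{l_μ(α)} − q^{a_μ(α)}) · ∏_{α∈Col(ζ)} (q^{a_μ(α)} − t^{l_μ(α)+1})/(q^{a_μ(α)} − t^{l_μ(α)}) satisfies the identity c_{μν}(q,t) = Π_μ / Π_{μ,ν}. -/

import Mathlib

open MvPolynomial Finset

noncomputable section

/-- The field `ℚ(q,t)` of rational functions in two indeterminates over `ℚ`. -/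
abbrev K : Type := FractionRing (MvPolynomial (Fin 2) ℚ)

/-- The indeterminate `q` in `ℚ(q,t)`. -/
def qq : K := algebraMap (MvPolynomial (Fin 2) ℚ) K (X 0)

/-- The indeterminate `t` in `ℚ(q,t)`. -/
def tt : K := algebraMap (MvPolynomial (Fin 2) ℚ) K (X 1)

/-- The arm `a_μ(i,j) = μ_{i+1} - 1 - j` of a cell of `μ` (as an integer). -/
def arm (μ : YoungDiagram) (c : ℕ × ℕ) : ℤ := (μ.rowLen c.1 : ℤ) - 1 - c.2

/-- The leg of a cell of `μ` (as an integer). -/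
def leg (μ : YoungDiagram) (c : ℕ × ℕ) : ℤ := (μ.colLen c.2 : ℤ) - 1 - c.1

/-- A corner cell of `μ`: a cell with arm and leg both zero. -/
def IsCornerCell (μ : YoungDiagram) (c : ℕ × ℕ) : Prop :=
  c ∈ μ ∧ arm μ c = 0 ∧ leg μ c = 0

/-- `Π_μ = ∏_{α∈μ} (1 - t^{1+l(α)} q^{-a(α)})(1 - t^{-l(α)} q^{1+a(α)})`. -/
def PiMu (μ : YoungDiagram) : K :=
  ∏ α ∈ μ.cells,
    ((1 - tt ^ (1 + leg μ α) * qq ^ (-(arm μ α))) *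
      (1 - tt ^ (-(leg μ α)) * qq ^ (1 + arm μ α)))

/-- `Π_{μ,ν} = (1-t)(1-q)·P₁·P₂·P₃` attached to a corner cell `ζ` of `μ`. -/
def PiMuNu (μ : YoungDiagram) (ζ : ℕ × ℕ) : K :=
  (1 - tt) * (1 - qq) *
    (∏ α ∈ μ.cells.filter (fun α => α.1 ≠ ζ.1 ∧ α.2 ≠ ζ.2),
      ((1 - tt ^ (1 + leg μ α) * qq ^ (-(arm μ α))) *
        (1 - tt ^ (-(leg μ α)) * qq ^ (1 + arm μ α)))) *
    (∏ α ∈ μ.cells.filter (fun α => α.1 = ζ.1 ∧ α ≠ ζ),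
      ((1 - tt ^ (1 + leg μ α) * qq ^ (-(arm μ α))) *
        (1 - tt ^ (-(leg μ α)) * qq ^ (arm μ α)))) *
    (∏ α ∈ μ.cells.filter (fun α => α.2 = ζ.2 ∧ α ≠ ζ),
      ((1 - tt ^ (-(leg μ α)) * qq ^ (1 + arm μ α)) *
        (1 - tt ^ (leg μ α) * qq ^ (-(arm μ α)))))

lemma pieri_inj : Function.Injective (algebraMap (MvPolynomial (Fin 2) ℚ) K) :=
  IsFractionRing.injective _ _

lemma qq_ne_zero : qq ≠ 0 := by
  rw [qq, Ne, ← (algebraMap (MvPolynomial (Fin 2) ℚ) K).map_zero]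
  exact fun h => X_ne_zero 0 (pieri_inj h)

lemma tt_ne_zero : tt ≠ 0 := by
  rw [tt, Ne, ← (algebraMap (MvPolynomial (Fin 2) ℚ) K).map_zero]
  exact fun h => X_ne_zero 1 (pieri_inj h)

lemma tpow_ne_qpow (m k : ℕ) (h : m ≠ 0 ∨ k ≠ 0) : (tt : K)^m ≠ qq^k := by
  rw [tt, qq, ← map_pow, ← map_pow]
  intro he
  have he' : (X 1 : MvPolynomial (Fin 2) ℚ)^m = (X 0)^k := pieri_inj he
  rcases h with h | h
  · have := congrArg (eval (fun i : Fin 2 => if i = 0 then (1:ℚ) else 0)) he'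
    simp [zero_pow h] at this
  · have := congrArg (eval (fun i : Fin 2 => if i = 0 then (0:ℚ) else 1)) he'
    simp [zero_pow h] at this

lemma tzpow_ne_qzpow (l a : ℤ) (hl : 0 ≤ l) (ha : 0 ≤ a) (h : l ≠ 0 ∨ a ≠ 0) :
    (tt : K) ^ l ≠ qq ^ a := by
  lift l to ℕ using hl
  lift a to ℕ using ha
  rw [zpow_natCast, zpow_natCast]
  exact tpow_ne_qpow _ _ (by exact_mod_cast h)

lemma fac1_ne (l a : ℤ) (hl : 0 ≤ l) (ha : 0 ≤ a) (h : l ≠ 0 ∨ a ≠ 0) :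
    1 - (tt : K) ^ l * qq ^ (-a) ≠ 0 := by
  rw [sub_ne_zero, zpow_neg]
  intro he
  exact tzpow_ne_qzpow l a hl ha h
    ((mul_inv_eq_one₀ (zpow_ne_zero _ qq_ne_zero)).mp he.symm)

lemma fac2_ne (l a : ℤ) (hl : 0 ≤ l) (ha : 0 ≤ a) (h : l ≠ 0 ∨ a ≠ 0) :
    1 - (tt : K) ^ (-l) * qq ^ a ≠ 0 := by
  rw [sub_ne_zero, zpow_neg]
  intro he
  exact tzpow_ne_qzpow l a hl ha h
    ((inv_mul_eq_one₀ (zpow_ne_zero _ tt_ne_zero)).mp he.symm)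

lemma row_cell (l a : ℤ) (hl : 0 ≤ l) (ha : 1 ≤ a) :
    (tt ^ l - qq ^ (a + 1)) / (tt ^ l - qq ^ a) *
      ((1 - tt ^ (1 + l) * qq ^ (-a)) * (1 - tt ^ (-l) * qq ^ a)) =
    (1 - tt ^ (1 + l) * qq ^ (-a)) * (1 - tt ^ (-l) * qq ^ (1 + a)) := by
  have hT : (tt : K) ^ l ≠ 0 := zpow_ne_zero _ tt_ne_zero
  have hQ : (qq : K) ^ a ≠ 0 := zpow_ne_zero _ qq_ne_zero
  have hTQ : (tt : K) ^ l - qq ^ a ≠ 0 :=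
    sub_ne_zero.mpr (tzpow_ne_qzpow l a hl (by omega) (Or.inr (by omega)))
  rw [zpow_add₀ qq_ne_zero a 1, zpow_add₀ tt_ne_zero 1 l, zpow_add₀ qq_ne_zero 1 a,
      zpow_neg, zpow_neg, zpow_one, zpow_one]
  field_simp

lemma col_cell (l a : ℤ) (hl : 1 ≤ l) (ha : 0 ≤ a) :
    (qq ^ a - tt ^ (l + 1)) / (qq ^ a - tt ^ l) *
      ((1 - tt ^ (-l) * qq ^ (1 + a)) * (1 - tt ^ l * qq ^ (-a))) =
    (1 - tt ^ (1 + l) * qq ^ (-a)) * (1 - tt ^ (-l) * qq ^ (1 + a)) := by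
  have hT : (tt : K) ^ l ≠ 0 := zpow_ne_zero _ tt_ne_zero
  have hQ : (qq : K) ^ a ≠ 0 := zpow_ne_zero _ qq_ne_zero
  have hTQ : (qq : K) ^ a - tt ^ l ≠ 0 :=
    sub_ne_zero.mpr fun e => (tzpow_ne_qzpow l a (by omega) ha (Or.inl (by omega))) e.symm
  rw [zpow_add₀ tt_ne_zero l 1, zpow_add₀ tt_ne_zero 1 l, zpow_add₀ qq_ne_zero 1 a,
      zpow_neg, zpow_neg, zpow_one, zpow_one]
  field_simp

lemma arm_nonneg {μ : YoungDiagram} {α : ℕ × ℕ} (h : α ∈ μ.cells) : 0 ≤ arm μ α := by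
  have : α.2 < μ.rowLen α.1 := by
    rw [← YoungDiagram.mem_iff_lt_rowLen]
    simpa using (μ.mem_cells α).mp h
  simp only [arm]; omega

lemma leg_nonneg {μ : YoungDiagram} {α : ℕ × ℕ} (h : α ∈ μ.cells) : 0 ≤ leg μ α := by
  have : α.1 < μ.colLen α.2 := by
    rw [← YoungDiagram.mem_iff_lt_colLen]
    simpa using (μ.mem_cells α).mp h
  simp only [leg]; omega

lemma arm_row_pos {μ : YoungDiagram} {ζ α : ℕ × ℕ} (hζ : IsCornerCell μ ζ)
    (h : α ∈ μ.cells) (h1 : α.1 = ζ.1) (h2 : α ≠ ζ) : 1 ≤ arm μ α := by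
  have hlt : α.2 < μ.rowLen α.1 := by
    rw [← YoungDiagram.mem_iff_lt_rowLen]
    simpa using (μ.mem_cells α).mp h
  have hne : α.2 ≠ ζ.2 := fun e => h2 (Prod.ext h1 e)
  have hζa : arm μ ζ = 0 := hζ.2.1
  simp only [arm] at hζa ⊢
  rw [h1] at hlt ⊢
  omega

lemma leg_col_pos {μ : YoungDiagram} {ζ α : ℕ × ℕ} (hζ : IsCornerCell μ ζ)
    (h : α ∈ μ.cells) (h1 : α.2 = ζ.2) (h2 : α ≠ ζ) : 1 ≤ leg μ α := by
  have hlt : α.1 < μ.colLen α.2 := by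
    rw [← YoungDiagram.mem_iff_lt_colLen]
    simpa using (μ.mem_cells α).mp h
  have hne : α.1 ≠ ζ.1 := fun e => h2 (Prod.ext e h1)
  have hζl : leg μ ζ = 0 := hζ.2.2
  simp only [leg] at hζl ⊢
  rw [h1] at hlt ⊢
  omega

lemma prod_decomp {M : Type*} [CommMonoid M] (μ : YoungDiagram) (ζ : ℕ × ℕ)
    (hζ : ζ ∈ μ.cells) (g : ℕ × ℕ → M) :
    ∏ α ∈ μ.cells, g α =
      g ζ * (∏ α ∈ μ.cells.filter (fun α => α.1 = ζ.1 ∧ α ≠ ζ), g α) *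
        (∏ α ∈ μ.cells.filter (fun α => α.2 = ζ.2 ∧ α ≠ ζ), g α) *
        (∏ α ∈ μ.cells.filter (fun α => α.1 ≠ ζ.1 ∧ α.2 ≠ ζ.2), g α) := by
  have e1 : μ.cells.filter (fun α => α = ζ) = {ζ} := by
    ext α; simp only [mem_filter, mem_singleton]
    exact ⟨fun h => h.2, fun h => ⟨h ▸ hζ, h⟩⟩
  have e2 : (μ.cells.filter (fun α => ¬ α = ζ)).filter (fun α => α.1 = ζ.1) =
      μ.cells.filter (fun α => α.1 = ζ.1 ∧ α ≠ ζ) := by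
    rw [Finset.filter_filter]
    exact Finset.filter_congr fun α _ => by tauto
  have e3 : ((μ.cells.filter (fun α => ¬ α = ζ)).filter (fun α => ¬ α.1 = ζ.1)).filter
        (fun α => α.2 = ζ.2) =
      μ.cells.filter (fun α => α.2 = ζ.2 ∧ α ≠ ζ) := by
    rw [Finset.filter_filter, Finset.filter_filter]
    refine Finset.filter_congr fun α _ => ?_
    simp only [Prod.ext_iff, ne_eq]
    tauto
  have e4 : ((μ.cells.filter (fun α => ¬ α = ζ)).filter (fun α => ¬ α.1 = ζ.1)).filter
        (fun α => ¬ α.2 = ζ.2) =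
      μ.cells.filter (fun α => α.1 ≠ ζ.1 ∧ α.2 ≠ ζ.2) := by
    rw [Finset.filter_filter, Finset.filter_filter]
    refine Finset.filter_congr fun α _ => ?_
    simp only [Prod.ext_iff, ne_eq]
    tauto
  rw [← Finset.prod_filter_mul_prod_filter_not μ.cells (fun α => α = ζ) g,
      ← Finset.prod_filter_mul_prod_filter_not
        (μ.cells.filter (fun α => ¬ α = ζ)) (fun α => α.1 = ζ.1) g,
      ← Finset.prod_filter_mul_prod_filter_not
        ((μ.cells.filter (fun α => ¬ α = ζ)).filter (fun α => ¬ α.1 = ζ.1))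
        (fun α => α.2 = ζ.2) g,
      e1, e2, e3, e4, Finset.prod_singleton]
  simp [mul_assoc]

/-- The Pieri coefficient `c_{μν}` equals `Π_μ / Π_{μ,ν}`. -/
theorem pieri_c_eq (n : ℕ) (μ : YoungDiagram) (hμ : μ.card = n)
    (ζ : ℕ × ℕ) (hζ : IsCornerCell μ ζ) :
    (∏ α ∈ μ.cells.filter (fun α => α.1 = ζ.1 ∧ α ≠ ζ),
        (tt ^ (leg μ α) - qq ^ (arm μ α + 1)) / (tt ^ (leg μ α) - qq ^ (arm μ α))) *
      (∏ α ∈ μ.cells.filter (fun α => α.2 = ζ.2 ∧ α ≠ ζ),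
        (qq ^ (arm μ α) - tt ^ (leg μ α + 1)) / (qq ^ (arm μ α) - tt ^ (leg μ α))) =
      PiMu μ / PiMuNu μ ζ := by
  have hζc : ζ ∈ μ.cells := (μ.mem_cells ζ).mpr hζ.1
  have h1t : (1 : K) - tt ≠ 0 := by
    rw [sub_ne_zero]
    intro e
    exact tpow_ne_qpow 1 0 (Or.inl one_ne_zero) (by simpa using e.symm)
  have h1q : (1 : K) - qq ≠ 0 := by
    rw [sub_ne_zero]
    intro e
    exact tpow_ne_qpow 0 1 (Or.inr one_ne_zero) (by simpa using e)
  have hP1 : (∏ α ∈ μ.cells.filter (fun α => α.1 ≠ ζ.1 ∧ α.2 ≠ ζ.2),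
      ((1 - tt ^ (1 + leg μ α) * qq ^ (-(arm μ α))) *
        (1 - tt ^ (-(leg μ α)) * qq ^ (1 + arm μ α)))) ≠ 0 := by
    rw [Finset.prod_ne_zero_iff]
    intro α hα
    have hm := (Finset.mem_filter.mp hα).1
    exact mul_ne_zero
      (fac1_ne _ _ (by have := leg_nonneg hm; omega) (arm_nonneg hm)
        (Or.inl (by have := leg_nonneg hm; omega)))
      (fac2_ne _ _ (leg_nonneg hm) (by have := arm_nonneg hm; omega)
        (Or.inr (by have := arm_nonneg hm; omega)))
  have hP2 : (∏ α ∈ μ.cells.filter (fun α => α.1 = ζ.1 ∧ α ≠ ζ),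
      ((1 - tt ^ (1 + leg μ α) * qq ^ (-(arm μ α))) *
        (1 - tt ^ (-(leg μ α)) * qq ^ (arm μ α)))) ≠ 0 := by
    rw [Finset.prod_ne_zero_iff]
    intro α hα
    obtain ⟨hm, h1, h2⟩ := Finset.mem_filter.mp hα
    have ha := arm_row_pos hζ hm h1 h2
    exact mul_ne_zero
      (fac1_ne _ _ (by have := leg_nonneg hm; omega) (arm_nonneg hm)
        (Or.inl (by have := leg_nonneg hm; omega)))
      (fac2_ne _ _ (leg_nonneg hm) (by omega) (Or.inr (by omega)))
  have hP3 : (∏ α ∈ μ.cells.filter (fun α => α.2 = ζ.2 ∧ α ≠ ζ),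
      ((1 - tt ^ (-(leg μ α)) * qq ^ (1 + arm μ α)) *
        (1 - tt ^ (leg μ α) * qq ^ (-(arm μ α))))) ≠ 0 := by
    rw [Finset.prod_ne_zero_iff]
    intro α hα
    obtain ⟨hm, h1, h2⟩ := Finset.mem_filter.mp hα
    have hl := leg_col_pos hζ hm h1 h2
    exact mul_ne_zero
      (fac2_ne _ _ (leg_nonneg hm) (by have := arm_nonneg hm; omega)
        (Or.inr (by have := arm_nonneg hm; omega)))
      (fac1_ne _ _ (by omega) (arm_nonneg hm) (Or.inl (by omega)))
  have hPiMuNu : PiMuNu μ ζ ≠ 0 := by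
    rw [PiMuNu]
    exact mul_ne_zero (mul_ne_zero (mul_ne_zero (mul_ne_zero h1t h1q) hP1) hP2) hP3
  rw [eq_div_iff hPiMuNu, PiMu, PiMuNu,
    prod_decomp μ ζ hζc (fun α => (1 - tt ^ (1 + leg μ α) * qq ^ (-(arm μ α))) *
      (1 - tt ^ (-(leg μ α)) * qq ^ (1 + arm μ α)))]
  have hzeta : (1 - tt ^ (1 + leg μ ζ) * qq ^ (-(arm μ ζ))) *
      (1 - tt ^ (-(leg μ ζ)) * qq ^ (1 + arm μ ζ)) = (1 - tt) * (1 - qq) := by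
    rw [hζ.2.1, hζ.2.2]
    norm_num
  have hRow : (∏ α ∈ μ.cells.filter (fun α => α.1 = ζ.1 ∧ α ≠ ζ),
      ((1 - tt ^ (1 + leg μ α) * qq ^ (-(arm μ α))) *
        (1 - tt ^ (-(leg μ α)) * qq ^ (1 + arm μ α)))) =
      (∏ α ∈ μ.cells.filter (fun α => α.1 = ζ.1 ∧ α ≠ ζ),
        (tt ^ (leg μ α) - qq ^ (arm μ α + 1)) / (tt ^ (leg μ α) - qq ^ (arm μ α))) *
      (∏ α ∈ μ.cells.filter (fun α => α.1 = ζ.1 ∧ α ≠ ζ),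
        ((1 - tt ^ (1 + leg μ α) * qq ^ (-(arm μ α))) *
          (1 - tt ^ (-(leg μ α)) * qq ^ (arm μ α)))) := by
    rw [← Finset.prod_mul_distrib]
    refine Finset.prod_congr rfl fun α hα => ?_
    obtain ⟨hm, h1, h2⟩ := Finset.mem_filter.mp hα
    exact (row_cell (leg μ α) (arm μ α) (leg_nonneg hm) (arm_row_pos hζ hm h1 h2)).symm
  have hCol : (∏ α ∈ μ.cells.filter (fun α => α.2 = ζ.2 ∧ α ≠ ζ),
      ((1 - tt ^ (1 + leg μ α) * qq ^ (-(arm μ α))) *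
        (1 - tt ^ (-(leg μ α)) * qq ^ (1 + arm μ α)))) =
      (∏ α ∈ μ.cells.filter (fun α => α.2 = ζ.2 ∧ α ≠ ζ),
        (qq ^ (arm μ α) - tt ^ (leg μ α + 1)) / (qq ^ (arm μ α) - tt ^ (leg μ α))) *
      (∏ α ∈ μ.cells.filter (fun α => α.2 = ζ.2 ∧ α ≠ ζ),
        ((1 - tt ^ (-(leg μ α)) * qq ^ (1 + arm μ α)) *
          (1 - tt ^ (leg μ α) * qq ^ (-(arm μ α))))) := by
    rw [← Finset.prod_mul_distrib]
    refine Finset.prod_congr rfl fun α hα => ?_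
    obtain ⟨hm, h1, h2⟩ := Finset.mem_filter.mp hα
    exact (col_cell (leg μ α) (arm μ α) (leg_col_pos hζ hm h1 h2) (arm_nonneg hm)).symm
  rw [hzeta, hRow, hCol]
  ring
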